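/- Let r = p^m with p prime and let A = 𝔽_r[T] be the polynomial ring over the finite field 𝔽_r. Let v be a nonzero prime ideal of A and equip A with its v-adic topology (the topology in which the powers vᵏ form a basis of neighborhoods of 0). Then for every n ≥ 0 the n-th Hasse derivative D_n : A → A is continuous with respect to the v-adic topology on source and target. -/

import Mathlib

open Polynomial

lemma pow_dvd_hasseDeriv_pow {R : Type*} [CommSemiring R] (u : R[X]) :
    ∀ s n : ℕ, u ^ (s - n) ∣ hasseDeriv n (u ^ s) := by
  intro s
  induction s with
  | zero =>
    intro n
    simpa using one_dvd _
  | succ s ih =>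
    intro n
    rw [pow_succ', hasseDeriv_mul]
    apply Finset.dvd_sum
    rintro ⟨i, j⟩ hij
    rw [Finset.HasAntidiagonal.mem_antidiagonal] at hij
    rcases Nat.eq_zero_or_pos i with hi | hi
    · subst hi
      simp only [Nat.zero_add] at hij
      subst hij
      rw [hasseDeriv_zero']
      exact dvd_trans (pow_dvd_pow u (by omega : s + 1 - j ≤ (s - j) + 1))
        (by rw [pow_succ']; exact mul_dvd_mul_left u (ih j))
    · exact Dvd.dvd.mul_left
        (dvd_trans (pow_dvd_pow u (by omega : s + 1 - n ≤ s - j)) (ih j)) _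

/-- for a nonzero prime `v` of `A = 𝔽_r[T]`, every Hasse derivative
`D_n : A → A` is continuous for the `v`-adic topology. -/
theorem stmt_10 (p m : ℕ) [Fact p.Prime] (hm : 0 < m)
    (Fr : Type*) [Field Fr] [Fintype Fr] (hcard : Fintype.card Fr = p ^ m)
    (v : Ideal (Polynomial Fr)) (hv : v.IsPrime) (hv0 : v ≠ ⊥) (n : ℕ) :
    @Continuous (Polynomial Fr) (Polynomial Fr) v.adicTopology v.adicTopology
      (fun f => hasseDeriv n f) := by
  letI := v.adicTopology
  haveI : NonarchimedeanRing (Polynomial Fr) := v.nonarchimedean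
  obtain ⟨π, hπ⟩ := (IsPrincipalIdealRing.principal v).principal
  -- key divisibility: f ∈ v ^ (n + k) → hasseDeriv n f ∈ v ^ k
  have key : ∀ k : ℕ, ∀ f ∈ v ^ (n + k), hasseDeriv n f ∈ v ^ k := by
    intro k f hf
    rw [hπ, Ideal.submodule_span_eq, Ideal.span_singleton_pow,
      Ideal.mem_span_singleton] at hf ⊢
    obtain ⟨g, rfl⟩ := hf
    rw [hasseDeriv_mul]
    apply Finset.dvd_sum
    rintro ⟨i, j⟩ hij
    rw [Finset.HasAntidiagonal.mem_antidiagonal] at hij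
    exact Dvd.dvd.mul_right
      (dvd_trans (pow_dvd_pow π (by omega : k ≤ (n + k) - i))
        (pow_dvd_hasseDeriv_pow π (n + k) i)) _
  have hcont : ContinuousAt (fun f => hasseDeriv n f) (0 : Polynomial Fr) := by
    rw [ContinuousAt]
    simp only [map_zero]
    rw [(v.hasBasis_nhds_zero_adic).tendsto_iff v.hasBasis_nhds_zero_adic]
    intro k _
    exact ⟨n + k, trivial, fun f hf => key k f hf⟩
  exact continuous_of_continuousAt_zero (hasseDeriv n).toAddMonoidHom hcont
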